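/- Let (𝒱, J) be an essentially small site and let (ℬ, F) be a base for 𝒱, and equip ℬ with the F-induced topology. Then F induces an equivalence of topoi: the functor from the category of sheaves of sets on (𝒱, J) to the category of sheaves of sets on ℬ with the F-induced topology, sending a sheaf 𝒢 to the sheaf B ↦ 𝒢(F(B)) (composition with F^op), is an equivalence of categories. -/

import Mathlib

open CategoryTheory

universe u

/-- Property (⋆) of Beilinson for families of pairs indexed by `Fin n`:
for every object `X` of `V` and every finite family of pairs `(Bo α, f α)` with
`f α : X ⟶ F.obj (Bo α)`, there exist objects `B' β` of `B` and morphisms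
`g β : F.obj (B' β) ⟶ X` generating a `J`-covering sieve of `X`, such that every
composite `g β ≫ f α` is the image under `F` of a morphism `B' β ⟶ Bo α`. -/
def StarPropertyOn {B V : Type u} [SmallCategory B] [SmallCategory V]
    (F : B ⥤ V) (J : GrothendieckTopology V) (n : ℕ) : Prop :=
  ∀ (X : V) (Bo : Fin n → B) (f : ∀ α, X ⟶ F.obj (Bo α)),
    ∃ (ι : Type u) (B' : ι → B) (g : ∀ β, F.obj (B' β) ⟶ X),
      Sieve.ofArrows (fun β => F.obj (B' β)) g ∈ J X ∧
      ∀ (α : Fin n) (β : ι), ∃ h : B' β ⟶ Bo α, F.map h = g β ≫ f α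

/-- Property (⋆): the above for all finite families. -/
def StarProperty {B V : Type u} [SmallCategory B] [SmallCategory V]
    (F : B ⥤ V) (J : GrothendieckTopology V) : Prop :=
  ∀ n : ℕ, StarPropertyOn F J n


/-- Composition with `F.op`, as a functor from `J`-sheaves of sets to `K`-sheaves of sets,
given the fact `hc` that composition with `F.op` preserves the sheaf condition. -/
def compSheafFunctor {B V : Type u} [SmallCategory B] [SmallCategory V]
    (J : GrothendieckTopology V) (K : GrothendieckTopology B) (F : B ⥤ V)
    (hc : ∀ G : Sheaf J (Type u), Presheaf.IsSheaf K (F.op ⋙ G.val)) :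
    Sheaf J (Type u) ⥤ Sheaf K (Type u) where
  obj G := ⟨F.op ⋙ G.val, hc G⟩
  map η := ⟨Functor.whiskerLeft F.op η.hom⟩

/-- If `(B, F)` is a base for the site `(V, J)` and `K` is the `F`-induced topology on `B`,
then the functor "composition with `F`" from sheaves of sets on `(V, J)` to sheaves of sets
on `(B, K)` is an equivalence of categories. -/
theorem induced_topology_sheaf_equivalence {B V : Type u} [SmallCategory B] [SmallCategory V]
    (J : GrothendieckTopology V) (F : B ⥤ V) [F.Faithful]
    (hF : StarProperty F J)
    (K : GrothendieckTopology B)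
    (hK : ∀ (X : B) (S : Sieve X), S ∈ K X ↔ S.functorPushforward F ∈ J (F.obj X)) :
    ∃ hc : ∀ G : Sheaf J (Type u), Presheaf.IsSheaf K (F.op ⋙ G.val),
      (compSheafFunctor J K F hc).IsEquivalence := by
  -- F is cover dense: apply the star property with the empty family.
  have hCD : F.IsCoverDense J := by
    constructor
    intro X
    obtain ⟨ι, B', g, hg, -⟩ := hF 0 X Fin.elim0 (fun α => α.elim0)
    refine J.superset_covering ?_ hg
    rintro Y f ⟨Z, e, gb, ⟨β⟩, rfl⟩
    exact (Sieve.coverByImage F X).downward_closed (Presieve.in_coverByImage F (g β)) e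
  -- F is locally full: apply the star property with a two-element family.
  have hLFull : F.IsLocallyFull J := by
    constructor
    intro U Vo f
    obtain ⟨ι, B', g, hg, hcomp⟩ := hF 2 (F.obj U) ![U, Vo]
      (Fin.cases (𝟙 (F.obj U)) (Fin.cases f (fun i => i.elim0)))
    refine J.superset_covering ?_ hg
    rintro Y y ⟨Z, e, gb, ⟨β⟩, rfl⟩
    obtain ⟨h0, hh0⟩ := hcomp 0 β
    obtain ⟨h1, hh1⟩ := hcomp 1 β
    erw [Fin.cases_zero, Category.comp_id] at hh0
    simp only [Matrix.cons_val_zero, Matrix.cons_val_one, Matrix.head_cons] at hh0 hh1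
    refine Sieve.downward_closed _ ?_ e
    refine ⟨B' β, h0, 𝟙 _, ⟨h1, ?_⟩, by simp [hh0]⟩
    rw [hh1, hh0]; rfl
  -- F is locally faithful since it is faithful.
  have hLFaith : F.IsLocallyFaithful J := by
    constructor
    intro U Vo f₁ f₂ hf
    have : f₁ = f₂ := F.map_injective hf
    subst this
    obtain ⟨ι, B', g, hg, hcomp⟩ := hF 1 (F.obj U) (fun _ => U) (fun _ => 𝟙 _)
    refine J.superset_covering ?_ hg
    rintro Y y ⟨Z, e, gb, ⟨β⟩, rfl⟩
    obtain ⟨h0, hh0⟩ := hcomp 0 β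
    rw [Category.comp_id] at hh0
    refine Sieve.downward_closed _ ?_ e
    exact ⟨B' β, h0, 𝟙 _, by simp [Sieve.equalizer], by simp [hh0]⟩
  have : F.IsDenseSubsite K J := by
    constructor
    · exact hCD
    · exact hLFull
    · exact hLFaith
    · intro X S
      exact (hK X S).symm
  have hc : ∀ G : Sheaf J (Type u), Presheaf.IsSheaf K (F.op ⋙ G.val) :=
    fun G => F.op_comp_isSheaf K J G
  refine ⟨hc, ?_⟩
  have : compSheafFunctor J K F hc = F.sheafPushforwardContinuous (Type u) K J := rfl
  rw [this]
  infer_instance
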